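/- Let l ≥ 1 and let a, b, c : ℤ → ℂ be l-periodic sequences. Let p be an integer, let T = tr A_l(p), let D = det A_l(p), assume D ≠ 0, and let d be a complex number with d² = D. Then for every integer j with 0 ≤ j ≤ l − 2 and every integer m ≥ 1, K_{lm+j}(p−j) = d^{m−1}·U_{m−1}(T/(2d))·(K_j(p−j)·K_l(p) − b_{p−1}·c_{p−1}·K_{j−1}(p−j)·K_{l−1}(p+1)) − d^m·U_{m−2}(T/(2d))·K_j(p−j). -/

import Mathlib

/-- The continuant `K_n(p)` of the sequences `a b c : ℤ → ℂ`: the determinant of the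
`n × n` tridiagonal matrix with diagonal `a_p, …, a_{p+n-1}`, superdiagonal
`b_p, …, b_{p+n-2}` and subdiagonal `c_p, …, c_{p+n-2}`; it equals `1` for `n = 0`
and `0` for `n < 0`. -/
noncomputable def contK (a b c : ℤ → ℂ) (p n : ℤ) : ℂ :=
  if n < 0 then 0 else
    Matrix.det (Matrix.of fun i j : Fin n.toNat =>
      if (i : ℕ) = (j : ℕ) then a (p + (i : ℕ))
      else if (i : ℕ) + 1 = (j : ℕ) then b (p + (i : ℕ))
      else if (i : ℕ) = (j : ℕ) + 1 then c (p + (j : ℕ))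
      else 0)

/-- The 2×2 matrix `L(α, β)` with first row `(α, β)` and second row `(1, 0)`. -/
def Lmat (α β : ℂ) : Matrix (Fin 2) (Fin 2) ℂ := !![α, β; 1, 0]

/-- `A_n(p) = L(a_p, −b_p c_p) ⋯ L(a_{p+n−1}, −b_{p+n−1} c_{p+n−1})`. -/
noncomputable def Amat (a b c : ℤ → ℂ) (p : ℤ) (n : ℕ) : Matrix (Fin 2) (Fin 2) ℂ :=
  ((List.range n).map (fun i => Lmat (a (p + (i : ℕ))) (-(b (p + (i : ℕ)) * c (p + (i : ℕ)))))).prod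

noncomputable def trid (a b c : ℤ → ℂ) (p : ℤ) (n : ℕ) : Matrix (Fin n) (Fin n) ℂ :=
  Matrix.of fun i j =>
      if (i : ℕ) = (j : ℕ) then a (p + (i : ℕ))
      else if (i : ℕ) + 1 = (j : ℕ) then b (p + (i : ℕ))
      else if (i : ℕ) = (j : ℕ) + 1 then c (p + (j : ℕ))
      else 0

lemma contK_neg (a b c : ℤ → ℂ) (p n : ℤ) (h : n < 0) : contK a b c p n = 0 := by
  rw [contK, if_pos h]

lemma contK_natCast (a b c : ℤ → ℂ) (p : ℤ) (n : ℕ) :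
    contK a b c p n = (trid a b c p n).det := by
  rw [contK, if_neg (by exact_mod_cast Int.not_lt.2 (Int.natCast_nonneg n))]
  rfl

lemma contK_zero (a b c : ℤ → ℂ) (p : ℤ) : contK a b c p 0 = 1 := by
  have := contK_natCast a b c p 0
  simpa [trid] using this

lemma contK_one (a b c : ℤ → ℂ) (p : ℤ) : contK a b c p 1 = a p := by
  have := contK_natCast a b c p 1
  simp only [Nat.cast_one] at this
  rw [this, Matrix.det_fin_one]
  simp [trid]

lemma trid_apply (a b c : ℤ → ℂ) (p : ℤ) (n : ℕ) (i j : Fin n) :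
    trid a b c p n i j =
      if (i : ℕ) = (j : ℕ) then a (p + (i : ℕ))
      else if (i : ℕ) + 1 = (j : ℕ) then b (p + (i : ℕ))
      else if (i : ℕ) = (j : ℕ) + 1 then c (p + (j : ℕ))
      else 0 := rfl

lemma trid_shift (a b c : ℤ → ℂ) (p : ℤ) (n : ℕ) :
    (trid a b c p (n+1)).submatrix Fin.succ Fin.succ = trid a b c (p+1) n := by
  ext i j
  simp only [Matrix.submatrix_apply, trid_apply, Fin.val_succ]
  have h1 : (i:ℕ) + 1 = (j:ℕ) + 1 ↔ (i:ℕ) = j := by omega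
  have h2 : (i:ℕ) + 1 + 1 = (j:ℕ) + 1 ↔ (i:ℕ) + 1 = j := by omega
  have h3 : (i:ℕ) + 1 = (j:ℕ) + 1 + 1 ↔ (i:ℕ) = (j:ℕ) + 1 := by omega
  have e1 : p + ((i:ℕ) + 1 : ℕ) = p + 1 + (i:ℕ) := by push_cast; ring
  have e2 : p + ((j:ℕ) + 1 : ℕ) = p + 1 + (j:ℕ) := by push_cast; ring
  rw [e1, e2]
  simp only [h1, h2, h3]

lemma trid_det_rec (a b c : ℤ → ℂ) (p : ℤ) (n : ℕ) :
    (trid a b c p (n+2)).det =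
      a p * (trid a b c (p+1) (n+1)).det - b p * c p * (trid a b c (p+2) n).det := by
  set M := trid a b c p (n+2) with hM
  rw [show (trid a b c p (n+2)).det = _ from Matrix.det_succ_column_zero M]
  rw [Fin.sum_univ_succ, Fin.sum_univ_succ]
  simp only [Fin.succ_zero_eq_one]
  have hz : ∀ i : Fin n, M i.succ.succ 0 = 0 := by
    intro i
    simp [hM, trid_apply]
  simp only [hz, mul_zero, zero_mul, Finset.sum_const_zero, add_zero]
  have hM00 : M 0 0 = a p := by simp [hM, trid_apply]
  have hM10 : M 1 0 = c p := by
    simp [hM, trid_apply]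
  have hsub0 : M.submatrix (Fin.succAbove 0) Fin.succ = trid a b c (p+1) (n+1) := by
    rw [Fin.succAbove_zero]; exact trid_shift a b c p (n+1)
  set N := M.submatrix (Fin.succAbove 1) Fin.succ with hN
  have hdetN : N.det = b p * (trid a b c (p+2) n).det := by
    rw [Matrix.det_succ_row_zero, Fin.sum_univ_succ]
    have hN0succ : ∀ j : Fin n, N 0 j.succ = 0 := by
      intro j
      have : (Fin.succAbove 1 (0 : Fin (n+1))) = (0 : Fin (n+2)) := by
        simp [Fin.succAbove]
      simp [hN, Matrix.submatrix_apply, this, hM, trid_apply]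
    have hN00 : N 0 0 = b p := by
      have : (Fin.succAbove 1 (0 : Fin (n+1))) = (0 : Fin (n+2)) := by
        simp [Fin.succAbove]
      simp [hN, Matrix.submatrix_apply, this, hM, trid_apply]
    simp only [hN0succ, mul_zero, zero_mul, Finset.sum_const_zero, add_zero]
    have hsub : N.submatrix Fin.succ (Fin.succAbove 0) = trid a b c (p+2) n := by
      rw [Fin.succAbove_zero]
      ext i j
      have hv : ((Fin.succAbove (1 : Fin (n+2)) i.succ : Fin (n+2)) : ℕ) = (i:ℕ) + 2 := by
        simp [Fin.succAbove, Fin.lt_def]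
      simp only [hN, Matrix.submatrix_apply, hM, trid_apply, hv, Fin.val_succ]
      have h1 : (i:ℕ) + 2 = (j:ℕ) + 1 + 1 ↔ (i:ℕ) = j := by omega
      have h2 : (i:ℕ) + 2 + 1 = (j:ℕ) + 1 + 1 ↔ (i:ℕ) + 1 = j := by omega
      have h3 : (i:ℕ) + 2 = (j:ℕ) + 1 + 1 + 1 ↔ (i:ℕ) = (j:ℕ) + 1 := by omega
      have e1 : p + ((i:ℕ) + 2 : ℕ) = p + 2 + (i:ℕ) := by push_cast; ring
      have e2 : p + ((j:ℕ) + 1 + 1 : ℕ) = p + 2 + (j:ℕ) := by push_cast; ring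
      rw [e1, e2]
      simp only [h1, h2, h3]
    rw [hsub, hN00]
    simp
  rw [hM00, hM10, hsub0, hdetN]
  simp
  ring

lemma contK_rec (a b c : ℤ → ℂ) (p : ℤ) (n : ℕ) :
    contK a b c p ((n:ℤ)+1) =
      a p * contK a b c (p+1) (n:ℤ) - b p * c p * contK a b c (p+2) ((n:ℤ)-1) := by
  cases n with
  | zero =>
    simp only [Nat.cast_zero, zero_add, zero_sub]
    rw [contK_one, contK_zero, contK_neg a b c _ _ (by norm_num)]
    ring
  | succ k =>
    rw [show ((k+1:ℕ):ℤ) - 1 = ((k : ℕ) : ℤ) by push_cast; ring,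
      show ((k+1:ℕ):ℤ) + 1 = ((k+2 : ℕ) : ℤ) by push_cast; ring,
      contK_natCast, contK_natCast, contK_natCast, trid_det_rec]

lemma Amat_zero (a b c : ℤ → ℂ) (p : ℤ) : Amat a b c p 0 = 1 := by
  simp [Amat]

lemma Amat_succ_front (a b c : ℤ → ℂ) (p : ℤ) (n : ℕ) :
    Amat a b c p (n+1) = Lmat (a p) (-(b p * c p)) * Amat a b c (p+1) n := by
  rw [Amat, List.range_succ_eq_map, List.map_cons, List.prod_cons, List.map_map]
  congr 1
  · norm_num
  · rw [Amat]
    congr 1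
    apply List.map_congr_left
    intro i _
    simp only [Function.comp_apply, Nat.succ_eq_add_one]
    have e : p + ((i + 1 : ℕ) : ℤ) = p + 1 + (i : ℕ) := by push_cast; ring
    rw [e]

lemma Amat_add (a b c : ℤ → ℂ) (p : ℤ) (n k : ℕ) :
    Amat a b c p (n + k) = Amat a b c p n * Amat a b c (p + n) k := by
  rw [Amat, List.range_add, List.map_append, List.prod_append, List.map_map]
  congr 1
  rw [Amat]
  congr 1
  apply List.map_congr_left
  intro i _
  simp only [Function.comp_apply]
  have e : p + ((n + i : ℕ) : ℤ) = p + (n:ℕ) + (i : ℕ) := by push_cast; ring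
  rw [e]

lemma Amat_entries (a b c : ℤ → ℂ) (n : ℕ) : ∀ p : ℤ,
    Amat a b c p (n+1) =
      !![contK a b c p ((n:ℤ)+1), -(b (p+(n:ℤ)) * c (p+(n:ℤ))) * contK a b c p (n:ℤ);
         contK a b c (p+1) (n:ℤ), -(b (p+(n:ℤ)) * c (p+(n:ℤ))) * contK a b c (p+1) ((n:ℤ)-1)] := by
  induction n with
  | zero =>
    intro p
    rw [Amat_succ_front, Amat_zero, mul_one, Lmat]
    simp only [Nat.cast_zero, zero_add, add_zero, zero_sub]
    rw [contK_one, contK_zero, contK_zero, contK_neg a b c _ _ (by norm_num)]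
    norm_num
  | succ k ih =>
    intro p
    rw [Amat_succ_front, ih (p+1), Lmat, Matrix.mul_fin_two]
    have r1 := contK_rec a b c p (k+1)
    have r2 := contK_rec a b c p k
    push_cast at r1 ⊢
    rw [show (k:ℤ)+1-1 = (k:ℤ) by ring] at r1 ⊢
    rw [show p+1+(k:ℤ) = p+((k:ℤ)+1) by ring, show p+1+1 = p+2 by ring]
    ext i j
    fin_cases i <;> fin_cases j <;> simp
    · linear_combination -r1
    · linear_combination (b (p+((k:ℤ)+1)) * c (p+((k:ℤ)+1))) * r2

lemma Amat_00 (a b c : ℤ → ℂ) (p : ℤ) (n : ℕ) :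
    Amat a b c p n 0 0 = contK a b c p (n:ℤ) := by
  cases n with
  | zero =>
    rw [Amat_zero]
    norm_num [Matrix.one_apply, contK_zero]
  | succ k =>
    rw [Amat_entries]
    push_cast
    simp

lemma cayley2 (M : Matrix (Fin 2) (Fin 2) ℂ) :
    M * M = M.trace • M - M.det • (1 : Matrix (Fin 2) (Fin 2) ℂ) := by
  ext i j
  fin_cases i <;> fin_cases j <;>
    simp [Matrix.mul_apply, Fin.sum_univ_two, Matrix.trace_fin_two, Matrix.det_fin_two,
      Matrix.one_apply, Matrix.sub_apply, Matrix.smul_apply, smul_eq_mul] <;> ring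

open Polynomial Polynomial.Chebyshev in
lemma pow_formula (M : Matrix (Fin 2) (Fin 2) ℂ) (d : ℂ) (hd : d ≠ 0)
    (hdet : d ^ 2 = M.det) (m : ℕ) :
    M ^ (m+1) = (d ^ m * (U ℂ (m:ℤ)).eval (M.trace / (2*d))) • M -
      (d ^ (m+1) * (U ℂ ((m:ℤ)-1)).eval (M.trace / (2*d))) • (1 : Matrix (Fin 2) (Fin 2) ℂ) := by
  set x := M.trace / (2*d) with hx
  have hT : M.trace = 2 * d * x := by
    rw [hx]; field_simp
  induction m with
  | zero => simp
  | succ m ih =>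
    have h1 : M ^ (m + 1 + 1) = M ^ (m+1) * M := by rw [pow_succ]
    rw [h1, ih, sub_mul, smul_mul_assoc, smul_mul_assoc, cayley2, one_mul, hT, ← hdet]
    have hUrec : (U ℂ ((m:ℤ)+1)).eval x = 2 * x * (U ℂ (m:ℤ)).eval x - (U ℂ ((m:ℤ)-1)).eval x := by
      rw [U_add_one]; simp
    push_cast
    have e1 : (m:ℤ) + 1 - 1 = (m:ℤ) := by ring
    rw [e1, hUrec]
    match_scalars <;> ring

lemma Amat_congr (a b c : ℤ → ℂ) (s : ℤ) (ha : ∀ k : ℤ, a (k + s) = a k)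
    (hb : ∀ k : ℤ, b (k + s) = b k) (hc : ∀ k : ℤ, c (k + s) = c k) (p : ℤ) (n : ℕ) :
    Amat a b c (p + s) n = Amat a b c p n := by
  rw [Amat, Amat]
  congr 1
  apply List.map_congr_left
  intro i _
  have e : p + s + (i : ℕ) = (p + (i:ℕ)) + s := by ring
  rw [e, ha, hb, hc]

lemma Amat_pow (l : ℕ) (a b c : ℤ → ℂ)
    (ha : ∀ k : ℤ, a (k + l) = a k) (hb : ∀ k : ℤ, b (k + l) = b k)
    (hc : ∀ k : ℤ, c (k + l) = c k) (p : ℤ) (m : ℕ) :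
    Amat a b c p (l * m) = (Amat a b c p l) ^ m := by
  have shift : ∀ (f : ℤ → ℂ), (∀ k : ℤ, f (k + l) = f k) → ∀ (m : ℕ) (k : ℤ),
      f (k + (l:ℤ) * m) = f k := by
    intro f hf m
    induction m with
    | zero => simp
    | succ m ih =>
      intro k
      have e : k + (l:ℤ) * ((m+1:ℕ):ℤ) = (k + (l:ℤ)*m) + l := by push_cast; ring
      rw [e, hf, ih]
  induction m with
  | zero => simp [Amat_zero]
  | succ m ih =>
    rw [pow_succ, ← ih, show l * (m+1) = l * m + l by ring, Amat_add]
    congr 1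
    have e : p + ((l*m : ℕ) : ℤ) = p + (l:ℤ) * m := by push_cast; ring
    rw [e]
    exact Amat_congr a b c ((l:ℤ)*m) (fun k => shift a ha m k) (fun k => shift b hb m k)
      (fun k => shift c hc m k) p l

/-- Rózsa's explicit formula for periodic continuants (nonzero determinant case): for
`l`-periodic sequences, `T = tr A_l(p)`, `D = det A_l(p) ≠ 0`, `d² = D`, `0 ≤ j ≤ l − 2`
and `m ≥ 1`:
`K_{lm+j}(p−j) = d^{m−1}·U_{m−1}(T/(2d))·(K_j(p−j)·K_l(p) − b_{p−1}·c_{p−1}·K_{j−1}(p−j)·K_{l−1}(p+1))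
− d^m·U_{m−2}(T/(2d))·K_j(p−j)`. -/
theorem contK_periodic_explicit (l : ℕ) (hl : 1 ≤ l) (a b c : ℤ → ℂ)
    (ha : ∀ k : ℤ, a (k + l) = a k) (hb : ∀ k : ℤ, b (k + l) = b k)
    (hc : ∀ k : ℤ, c (k + l) = c k) (p : ℤ) (T D d : ℂ)
    (hT : T = (Amat a b c p l).trace) (hD : D = (Amat a b c p l).det)
    (hD0 : D ≠ 0) (hd : d ^ 2 = D)
    (j : ℤ) (hj0 : 0 ≤ j) (hj : j ≤ (l : ℤ) - 2) (m : ℕ) (hm : 1 ≤ m) :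
    contK a b c (p - j) ((l : ℤ) * m + j) =
      d ^ (m - 1) * (Polynomial.Chebyshev.U ℂ ((m : ℤ) - 1)).eval (T / (2 * d))
          * (contK a b c (p - j) j * contK a b c p (l : ℤ)
              - b (p - 1) * c (p - 1) * contK a b c (p - j) (j - 1)
                * contK a b c (p + 1) ((l : ℤ) - 1))
        - d ^ m * (Polynomial.Chebyshev.U ℂ ((m : ℤ) - 2)).eval (T / (2 * d))
            * contK a b c (p - j) j := by
  obtain ⟨J, rfl⟩ : ∃ J : ℕ, (J:ℤ) = j := ⟨j.toNat, Int.toNat_of_nonneg hj0⟩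
  obtain ⟨m', rfl⟩ : ∃ m', m = m' + 1 := ⟨m - 1, (Nat.succ_pred_eq_of_pos hm).symm⟩
  have hdne : d ≠ 0 := by
    intro h; apply hD0; rw [← hd, h]; ring
  set B := Amat a b c p l with hB
  -- entries of B
  obtain ⟨l', rfl⟩ : ∃ l', l = l' + 1 := ⟨l - 1, (Nat.succ_pred_eq_of_pos hl).symm⟩
  have hBe := Amat_entries a b c l' p
  have hB00 : B 0 0 = contK a b c p ((l'+1:ℕ):ℤ) := by
    rw [hB, hBe]; push_cast; simp
  have hB10 : B 1 0 = contK a b c (p+1) (((l'+1:ℕ):ℤ) - 1) := by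
    rw [hB, hBe]; push_cast; simp
  -- entries of A_J
  have hA00 : Amat a b c (p - J) J 0 0 = contK a b c (p - J) (J:ℤ) :=
    Amat_00 a b c (p - J) J
  have hA01 : Amat a b c (p - J) J 0 1 =
      -(b (p-1) * c (p-1)) * contK a b c (p - J) ((J:ℤ)-1) := by
    cases J with
    | zero =>
      rw [Amat_zero, contK_neg a b c _ _ (by norm_num)]
      simp [Matrix.one_apply]
    | succ k =>
      rw [Amat_entries]
      have e : p - ((k+1:ℕ):ℤ) + (k:ℤ) = p - 1 := by push_cast; ring
      rw [e]
      push_cast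
      rw [show (k:ℤ)+1-1 = (k:ℤ) by ring]
      simp
  -- the power formula
  have hpow := pow_formula B d hdne (by rw [← hD, hd]) m'
  rw [← hT] at hpow
  -- main matrix identity
  have key : contK a b c (p - J) ((((l'+1):ℕ):ℤ) * ((m'+1:ℕ):ℤ) + (J:ℤ)) =
      (Amat a b c (p - J) (J + (l'+1) * (m'+1))) 0 0 := by
    rw [Amat_00]
    congr 1
    push_cast; ring
  rw [key, Amat_add, show p - (J:ℤ) + (J:ℕ) = p by push_cast; ring,
    Amat_pow (l'+1) a b c ha hb hc p (m'+1), ← hB, hpow]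
  rw [Matrix.mul_sub]
  rw [Matrix.mul_smul, Matrix.mul_smul, mul_one]
  simp only [Matrix.sub_apply, Matrix.smul_apply, smul_eq_mul, Matrix.mul_apply,
    Fin.sum_univ_two]
  rw [hA00, hA01, hB00, hB10]
  rw [show ((m'+1:ℕ):ℤ) - 1 = (m':ℤ) by push_cast; ring,
    show ((m'+1:ℕ):ℤ) - 2 = (m':ℤ) - 1 by push_cast; ring,
    show (m' + 1) - 1 = m' from rfl]
  
  ring
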